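/- arXiv:2504.12190 — 5 statements merged into one kernel-verified Lean document; each statement's English description precedes it below -/
import Mathlib

section
/- Let π̃ be a measure on a measurable space S, 𝔰 a π̃-measure-preserving measurable involution, T : S → S a π̃-measure-preserving measurable bijection satisfying T⁻¹ = 𝔰 ∘ T ∘ 𝔰, and λ̃ : S → [0,∞) a measurable function invariant under 𝔰 ∘ T (i.e. λ̃ ∘ 𝔰 ∘ T = λ̃). Define the kernel μ̃(a, db) = λ̃(a) δ_{T(a)}(db). Then μ̃ is in skew-detailed balance with respect to 𝔰 and π̃: for every suitably integrable f : S × S → ℝ, ∫∫ f(a,b) π̃(da) μ̃(a,db) = ∫∫ f(𝔰(a'), 𝔰(b')) π̃(db') μ̃(b', da'). -/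
open MeasureTheory ENNReal

/-- The deterministic rate kernel `μ̃(a, db) = λ̃(a) δ_{T(a)}(db)` is in skew-detailed
balance with respect to the involution `𝔰` and the measure `π̃`. -/
theorem deterministic_kernel_skew_detailed_balance
    {S : Type*} [MeasurableSpace S]
    (πt : Measure S)
    (s : S → S) (hs : Measurable s) (hinv : ∀ a, s (s a) = a)
    (hsπt : MeasurePreserving s πt πt)
    (T : S → S) (hT : Measurable T) (hTbij : Function.Bijective T)
    (hTπt : MeasurePreserving T πt πt)
    (hTskew : ∀ a, s (T (s (T a))) = a)
    (lam : S → ℝ≥0∞) (hlam : Measurable lam)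
    (hlaminv : ∀ a, lam (s (T a)) = lam a)
    (mu : S → Measure S) (hmu : ∀ a, mu a = lam a • Measure.dirac (T a)) :
    ∀ f : S × S → ℝ≥0∞, Measurable f →
      ∫⁻ a, ∫⁻ b, f (a, b) ∂(mu a) ∂πt
        = ∫⁻ b', ∫⁻ a', f (s a', s b') ∂(mu b') ∂πt := by
  intro f hf
  have hTs : ∀ a, T (s (T a)) = s a := fun a => by
    have := congrArg s (hTskew a); rwa [hinv] at this
  have h1 : ∀ a, ∫⁻ b, f (a, b) ∂(mu a) = lam a * f (a, T a) := by
    intro a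
    rw [hmu a, lintegral_smul_measure,
      lintegral_dirac' (T a) (show Measurable fun b => f (a, b) from
        hf.comp measurable_prodMk_left), smul_eq_mul]
  have h2 : ∀ b, ∫⁻ a', f (s a', s b) ∂(mu b) = lam b * f (s (T b), s b) := by
    intro b
    rw [hmu b, lintegral_smul_measure,
      lintegral_dirac' (T b) (show Measurable fun a' => f (s a', s b) from
        hf.comp (hs.prodMk measurable_const)), smul_eq_mul]
  simp only [h1, h2]
  have hst : MeasurePreserving (fun a => s (T a)) πt πt := hsπt.comp hTπt
  have key := hst.lintegral_comp (f := fun a => lam a * f (a, T a))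
    (hlam.mul (hf.comp (measurable_id.prodMk hT)))
  calc ∫⁻ a, lam a * f (a, T a) ∂πt
      = ∫⁻ b, lam (s (T b)) * f (s (T b), T (s (T b))) ∂πt := key.symm
    _ = ∫⁻ b, lam b * f (s (T b), s b) ∂πt := by
        congr 1; funext b; rw [hlaminv, hTs]
end

section
/- Let U ∈ C²(ℝ^d) be such that h(x) = U(x) − (κ/2)‖x‖² is convex for ‖x‖ > r (κ, r > 0), and let ℓ be the smallest eigenvalue of ∇²h over the closed ball of radius r. Then for any q, δ ∈ ℝ^d, with R₁ = ∫₀¹ (1−α)∇²U(q + αδ)δ dα and R₂ = ∫₀¹ ∇²U(q + αδ)δ dα, one has ⟨δ, R₁ − R₂⟩ ≤ −(κ/2)‖δ‖² + 2r·max{0, −ℓ}·‖δ‖. -/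
set_option maxHeartbeats 1000000


open MeasureTheory intervalIntegral

/-- Bound on the remainder term for a potential that is `κ`-strongly convex outside a
ball of radius `r`, with Hessian eigenvalues bounded below by `ℓ` inside the ball. -/
theorem remainder_bound
    {d : ℕ} (U : EuclideanSpace ℝ (Fin d) → ℝ) (hU : ContDiff ℝ 2 U)
    (κ r ℓ : ℝ) (hκ : 0 < κ) (hr : 0 < r)
    (h : EuclideanSpace ℝ (Fin d) → ℝ)
    (hh : ∀ x, h x = U x - κ / 2 * ‖x‖ ^ 2)
    (hconv : ∀ x : EuclideanSpace ℝ (Fin d), r < ‖x‖ →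
      ∀ v, (0:ℝ) ≤ inner ℝ v ((fderiv ℝ (gradient h) x) v))
    (hℓ : ∀ x : EuclideanSpace ℝ (Fin d), ‖x‖ ≤ r →
      ∀ v, ℓ * ‖v‖ ^ 2 ≤ inner ℝ v ((fderiv ℝ (gradient h) x) v))
    (q δ R₁ R₂ : EuclideanSpace ℝ (Fin d))
    (hR₁ : R₁ = ∫ α in (0:ℝ)..1, (1 - α) • (fderiv ℝ (gradient U) (q + α • δ)) δ)
    (hR₂ : R₂ = ∫ α in (0:ℝ)..1, (fderiv ℝ (gradient U) (q + α • δ)) δ) :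
    (inner ℝ δ (R₁ - R₂) : ℝ) ≤ -(κ / 2) * ‖δ‖ ^ 2 + 2 * r * max 0 (-ℓ) * ‖δ‖ := by
  classical
  set M : ℝ := max 0 (-ℓ) with hM
  have hM0 : 0 ≤ M := le_max_left _ _
  have hℓM : -M ≤ ℓ := by
    have : -ℓ ≤ M := le_max_right _ _
    linarith
  -- smoothness of the gradient of U
  have hG1 : ContDiff ℝ 1 (gradient U) := by
    have h1 : ContDiff ℝ 1 (fderiv ℝ U) := hU.fderiv_right (by norm_num)
    exact (InnerProductSpace.toDual ℝ (EuclideanSpace ℝ (Fin d))).symm.contDiff.comp h1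
  have hGdiff : Differentiable ℝ (gradient U) := hG1.differentiable (by norm_num)
  have hGcont : Continuous (fun x => fderiv ℝ (gradient U) x) :=
    hG1.continuous_fderiv (by norm_num)
  -- gradient of h
  have hgh : ∀ x, gradient h x = gradient U x - κ • x := by
    intro x
    have h1 : HasFDerivAt U (fderiv ℝ U x) x :=
      (hU.differentiable (by norm_num) x).hasFDerivAt
    have h2 : HasFDerivAt (fun y : EuclideanSpace ℝ (Fin d) => κ / 2 * ‖y‖ ^ 2)
        (κ • innerSL ℝ x) x := by
      have := ((hasStrictFDerivAt_norm_sq x).hasFDerivAt).const_smul (κ / 2)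
      have e : (κ / 2) • (2 • innerSL ℝ x) = κ • innerSL ℝ x := by
        ext y
        simp [real_inner_smul_left]
        ring
      rw [e] at this
      exact this
    have h3 : HasFDerivAt h (fderiv ℝ U x - κ • innerSL ℝ x) x := by
      have : h = fun y => U y - κ / 2 * ‖y‖ ^ 2 := funext hh
      rw [this]; exact h1.sub h2
    have h4 : gradient h x =
        (InnerProductSpace.toDual ℝ _).symm (fderiv ℝ U x - κ • innerSL ℝ x) := by
      rw [← h3.fderiv]; rfl
    have h5 : (InnerProductSpace.toDual ℝ (EuclideanSpace ℝ (Fin d))).symm (innerSL ℝ x)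
        = x := by
      have : innerSL ℝ x = InnerProductSpace.toDual ℝ (EuclideanSpace ℝ (Fin d)) x := by
        ext y; simp [InnerProductSpace.toDual_apply_apply]
      rw [this, LinearIsometryEquiv.symm_apply_apply]
    rw [h4, map_sub, LinearIsometryEquiv.map_smulₛₗ, h5]
    rfl
  have hfd : ∀ x v, (fderiv ℝ (gradient h) x) v = (fderiv ℝ (gradient U) x) v - κ • v := by
    intro x v
    have h1 : HasFDerivAt (gradient h)
        (fderiv ℝ (gradient U) x - κ • ContinuousLinearMap.id ℝ _) x := by
      have : gradient h = fun y => gradient U y - κ • y := funext hgh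
      rw [this]
      exact ((hGdiff x).hasFDerivAt).sub ((hasFDerivAt_id x).const_smul κ)
    rw [h1.fderiv]
    simp
  -- scalar functions
  set f : ℝ → ℝ := fun α => inner ℝ δ ((fderiv ℝ (gradient U) (q + α • δ)) δ) with hfdef
  set g : ℝ → ℝ := fun α => inner ℝ δ ((fderiv ℝ (gradient h) (q + α • δ)) δ) with hgdef
  have hfg : ∀ α, g α = f α - κ * ‖δ‖ ^ 2 := by
    intro α
    simp only [hfdef, hgdef, hfd, inner_sub_right, real_inner_smul_right,
      real_inner_self_eq_norm_sq]
  have hcont_vec : Continuous (fun α : ℝ => (fderiv ℝ (gradient U) (q + α • δ)) δ) := by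
    have hc : Continuous (fun α : ℝ => q + α • δ) :=
      continuous_const.add (continuous_id.smul continuous_const)
    exact (hGcont.comp hc).clm_apply continuous_const
  have hfcont : Continuous f := continuous_const.inner hcont_vec
  have hgcont : Continuous g := by
    have : g = fun α => f α - κ * ‖δ‖ ^ 2 := funext hfg
    rw [this]
    exact hfcont.sub continuous_const
  -- computing the inner product with the integrals
  have hint_vec : IntervalIntegrable
      (fun α : ℝ => (fderiv ℝ (gradient U) (q + α • δ)) δ) volume 0 1 :=
    hcont_vec.intervalIntegrable _ _
  have hint_vec1 : IntervalIntegrable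
      (fun α : ℝ => (1 - α) • (fderiv ℝ (gradient U) (q + α • δ)) δ) volume 0 1 :=
    ((continuous_const.sub continuous_id).smul hcont_vec).intervalIntegrable _ _
  have hinner1 : (inner ℝ δ R₁ : ℝ) = ∫ α in (0:ℝ)..1, (1 - α) * f α := by
    have h2 := (innerSL ℝ δ).intervalIntegral_comp_comm hint_vec1 (a := 0) (b := 1)
    have h3 : (innerSL ℝ δ) R₁ = ∫ α in (0:ℝ)..1, (1 - α) * f α := by
      rw [hR₁, ← h2]
      refine intervalIntegral.integral_congr fun α _ => ?_
      simp [hfdef, real_inner_smul_right]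
    exact h3
  have hinner2 : (inner ℝ δ R₂ : ℝ) = ∫ α in (0:ℝ)..1, f α := by
    have h2 := (innerSL ℝ δ).intervalIntegral_comp_comm hint_vec (a := 0) (b := 1)
    rw [hR₂]
    exact h2.symm
  have hcont1 : Continuous fun α : ℝ => (1 - α) * f α := by fun_prop
  have hcont2 : Continuous fun α : ℝ => α * g α := by fun_prop
  have hkey : (inner ℝ δ (R₁ - R₂) : ℝ)
      = (∫ α in (0:ℝ)..1, -(α * g α)) - κ / 2 * ‖δ‖ ^ 2 := by
    rw [inner_sub_right, hinner1, hinner2]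
    have e1 : (∫ α in (0:ℝ)..1, (1 - α) * f α) - ∫ α in (0:ℝ)..1, f α
        = ∫ α in (0:ℝ)..1, ((1 - α) * f α - f α) := by
      rw [intervalIntegral.integral_sub (hcont1.intervalIntegrable _ _)
        (hfcont.intervalIntegrable _ _)]
    rw [e1]
    have e2 : ∀ α : ℝ, (1 - α) * f α - f α = -(α * g α) - α * (κ * ‖δ‖ ^ 2) := by
      intro α
      rw [hfg α]
      ring
    have e3 : (∫ α in (0:ℝ)..1, ((1 - α) * f α - f α))
        = ∫ α in (0:ℝ)..1, (-(α * g α) - α * (κ * ‖δ‖ ^ 2)) :=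
      intervalIntegral.integral_congr fun α _ => e2 α
    rw [e3, intervalIntegral.integral_sub (f := fun α : ℝ => -(α * g α)) (hcont2.neg.intervalIntegrable _ _)
      ((by fun_prop : Continuous fun α : ℝ => α * (κ * ‖δ‖ ^ 2)).intervalIntegrable _ _)]
    have e4 : (∫ α in (0:ℝ)..1, α * (κ * ‖δ‖ ^ 2)) = κ / 2 * ‖δ‖ ^ 2 := by
      rw [intervalIntegral.integral_mul_const, integral_id]
      ring
    rw [e4]
  -- the set where the Hessian lower bound is used
  set S : Set ℝ := Set.Icc (0:ℝ) 1 ∩ {α : ℝ | ‖q + α • δ‖ ≤ r} with hSdef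
  have hSmeas : MeasurableSet S := by
    apply IsClosed.measurableSet
    apply isClosed_Icc.inter
    exact isClosed_le ((continuous_const.add (continuous_id.smul continuous_const)).norm)
      continuous_const
  set c : ℝ := M * ‖δ‖ ^ 2 with hc
  have hc0 : 0 ≤ c := by positivity
  set φ : ℝ → ℝ := S.indicator (fun _ => -c) with hφ
  have hφint : IntervalIntegrable φ volume 0 1 := by
    apply MeasureTheory.Integrable.intervalIntegrable
    rw [hφ, integrable_indicator_iff hSmeas]
    apply (integrableOn_const_iff (by finiteness)).2
    right
    calc volume S ≤ volume (Set.Icc (0:ℝ) 1) :=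
          measure_mono (Set.inter_subset_left)
      _ < ⊤ := by simp
  have hpt : ∀ α ∈ Set.Icc (0:ℝ) 1, φ α ≤ α * g α := by
    intro α hα
    by_cases hmem : ‖q + α • δ‖ ≤ r
    · have hαS : α ∈ S := ⟨hα, hmem⟩
      rw [hφ, Set.indicator_of_mem hαS]
      have h1 : ℓ * ‖δ‖ ^ 2 ≤ g α := hℓ _ hmem δ
      have h2 : -c ≤ g α := by
        have : -c ≤ ℓ * ‖δ‖ ^ 2 := by
          rw [hc]
          nlinarith [sq_nonneg ‖δ‖]
        linarith
      rcases hα with ⟨hα0, hα1⟩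
      nlinarith
    · have hαS : α ∉ S := fun hS => hmem hS.2
      rw [hφ, Set.indicator_of_notMem hαS]
      have h1 : 0 ≤ g α := hconv _ (lt_of_not_ge hmem) δ
      exact mul_nonneg hα.1 h1
  have hmono : (∫ α in (0:ℝ)..1, φ α) ≤ ∫ α in (0:ℝ)..1, α * g α :=
    intervalIntegral.integral_mono_on zero_le_one hφint
      (hcont2.intervalIntegrable _ _) hpt
  -- value of the integral of φ
  have hφval : (∫ α in (0:ℝ)..1, φ α)
      = (volume (S ∩ Set.Ioc (0:ℝ) 1)).toReal * (-c) := by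
    rw [intervalIntegral.integral_of_le zero_le_one, hφ,
      MeasureTheory.integral_indicator hSmeas, Measure.restrict_restrict hSmeas,
      MeasureTheory.setIntegral_const, smul_eq_mul, measureReal_def]
  -- bounding the measure
  have hvol : (volume (S ∩ Set.Ioc (0:ℝ) 1)).toReal * c ≤ 2 * r * M * ‖δ‖ := by
    by_cases hδ : δ = 0
    · have : c = 0 := by simp [hc, hδ]
      rw [this, mul_zero]
      positivity
    · have hδ0 : (0:ℝ) < ‖δ‖ := norm_pos_iff.2 hδ
      have hkey2 : ∀ x ∈ S, ∀ y ∈ S, x - y ≤ 2 * r / ‖δ‖ := by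
        intro x hx y hy
        have hxr : ‖q + x • δ‖ ≤ r := hx.2
        have hyr : ‖q + y • δ‖ ≤ r := hy.2
        have : ‖(x - y) • δ‖ ≤ 2 * r := by
          have e : (x - y) • δ = (q + x • δ) - (q + y • δ) := by
            rw [sub_smul]; abel
          rw [e]
          calc ‖(q + x • δ) - (q + y • δ)‖ ≤ ‖q + x • δ‖ + ‖q + y • δ‖ :=
                norm_sub_le _ _
            _ ≤ 2 * r := by linarith
        rw [norm_smul, Real.norm_eq_abs] at this
        have habs : |x - y| ≤ 2 * r / ‖δ‖ := by
          rw [le_div_iff₀ hδ0]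
          exact this
        calc x - y ≤ |x - y| := le_abs_self _
          _ ≤ 2 * r / ‖δ‖ := habs
      have hvolS : volume S ≤ ENNReal.ofReal (2 * r / ‖δ‖) := by
        rcases Set.eq_empty_or_nonempty S with hSe | hSne
        · simp [hSe]
        · have hbdd : BddBelow S := ⟨0, fun x hx => hx.1.1⟩
          set a : ℝ := sInf S with ha
          have hsub : S ⊆ Set.Icc a (a + 2 * r / ‖δ‖) := by
            intro x hx
            constructor
            · exact csInf_le hbdd hx
            · have : x - 2 * r / ‖δ‖ ≤ a := by
                apply le_csInf hSne
                intro y hy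
                have := hkey2 x hx y hy
                linarith
              linarith
          calc volume S ≤ volume (Set.Icc a (a + 2 * r / ‖δ‖)) := measure_mono hsub
            _ = ENNReal.ofReal (2 * r / ‖δ‖) := by
                rw [Real.volume_Icc]; ring_nf
      have htoReal : (volume (S ∩ Set.Ioc (0:ℝ) 1)).toReal ≤ 2 * r / ‖δ‖ := by
        apply ENNReal.toReal_le_of_le_ofReal (by positivity)
        exact le_trans (measure_mono Set.inter_subset_left) hvolS
      calc (volume (S ∩ Set.Ioc (0:ℝ) 1)).toReal * c ≤ (2 * r / ‖δ‖) * c :=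
            mul_le_mul_of_nonneg_right htoReal hc0
        _ = 2 * r * M * ‖δ‖ := by
            rw [hc]
            field_simp
  -- putting everything together
  have hneg : -(∫ α in (0:ℝ)..1, α * g α) ≤ 2 * r * M * ‖δ‖ := by
    have h1 : -(2 * r * M * ‖δ‖) ≤ ∫ α in (0:ℝ)..1, α * g α := by
      calc -(2 * r * M * ‖δ‖) ≤ -((volume (S ∩ Set.Ioc (0:ℝ) 1)).toReal * c) := by
            linarith
        _ = ∫ α in (0:ℝ)..1, φ α := by rw [hφval]; ring
        _ ≤ ∫ α in (0:ℝ)..1, α * g α := hmono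
    linarith
  rw [hkey, intervalIntegral.integral_neg]
  linarith
end

section
/- Let U ∈ C²(ℝ^d) with h(x) = U(x) − (κ/2)‖x‖² convex for ‖x‖ > r, and suppose inf_{q} (U(q) + C) = 0 for some constant C. Then with C̃ = sup_{‖q‖ ≤ r} √(2κ(U(q) + C)), one has ‖∇U(q)‖ ≥ √(2κ(U(q) + C)) − C̃ for all q ∈ ℝ^d. -/
open MeasureTheory

set_option maxHeartbeats 1000000 in
open InnerProductSpace in
/-- Lower bound on the gradient norm for a potential that is `κ`-strongly convex
outside the ball of radius `r`. -/
theorem gradient_lower_bound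
    {d : ℕ} (U : EuclideanSpace ℝ (Fin d) → ℝ) (hU : ContDiff ℝ 2 U)
    (κ r C : ℝ) (hκ : 0 < κ) (hr : 0 < r)
    (h : EuclideanSpace ℝ (Fin d) → ℝ)
    (hh : ∀ x, h x = U x - κ / 2 * ‖x‖ ^ 2)
    (hconv : ∀ x : EuclideanSpace ℝ (Fin d), r < ‖x‖ →
      ∀ v, (0:ℝ) ≤ inner ℝ v ((fderiv ℝ (gradient h) x) v))
    (hinf : IsGLB (Set.range fun q => U q + C) 0)
    (Ct : ℝ)
    (hCt : IsLUB ((fun q => Real.sqrt (2 * κ * (U q + C))) ''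
      {q : EuclideanSpace ℝ (Fin d) | ‖q‖ ≤ r}) Ct) :
    ∀ q : EuclideanSpace ℝ (Fin d),
      Real.sqrt (2 * κ * (U q + C)) - Ct ≤ ‖gradient U q‖ := by
  intro q
  have hposAll : ∀ x, 0 ≤ U x + C := fun x => hinf.1 ⟨x, rfl⟩
  by_cases hq : ‖q‖ ≤ r
  · have h1 : Real.sqrt (2 * κ * (U q + C)) ≤ Ct := hCt.1 ⟨q, hq, rfl⟩
    have h2 : (0:ℝ) ≤ ‖gradient U q‖ := norm_nonneg _
    linarith
  push_neg at hq
  have hq0 : 0 < ‖q‖ := lt_trans hr hq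
  have hCt0 : 0 ≤ Ct := by
    have h0 : Real.sqrt (2*κ*(U 0 + C)) ≤ Ct := hCt.1 ⟨0, by simp [hr.le], rfl⟩
    exact le_trans (Real.sqrt_nonneg _) h0
  have hfun : h = fun x => U x - κ/2 * ‖x‖^2 := funext hh
  have hC2h : ContDiff ℝ 2 h := by
    rw [hfun]; exact hU.sub (contDiff_const.mul (contDiff_norm_sq ℝ))
  have hUdiff : Differentiable ℝ U := hU.differentiable two_ne_zero
  have hhdiff : Differentiable ℝ h := hC2h.differentiable two_ne_zero
  have hgradC1 : ContDiff ℝ 1 (gradient h) := by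
    have h1 : ContDiff ℝ 1 (fderiv ℝ h) := hC2h.fderiv_right (m := 1) (by norm_num)
    exact ((toDual ℝ (EuclideanSpace ℝ (Fin d))).symm.contDiff).comp h1
  -- gradient of h
  have key : ∀ x, HasGradientAt h (gradient U x - κ • x) x := by
    intro x
    have h2 : HasFDerivAt U (toDual ℝ _ (gradient U x)) x :=
      hasGradientAt_iff_hasFDerivAt.mp (hUdiff x).hasGradientAt
    have h3 : HasFDerivAt (fun y : EuclideanSpace ℝ (Fin d) => ‖y‖^2)
        (toDual ℝ _ ((2:ℝ) • x)) x := by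
      have e1 : (fun y : EuclideanSpace ℝ (Fin d) => ‖y‖^2)
          = fun y : EuclideanSpace ℝ (Fin d) => (inner ℝ y y : ℝ) :=
        funext fun y => (real_inner_self_eq_norm_sq y).symm
      rw [e1]
      have h4 := (hasFDerivAt_id x).inner ℝ (hasFDerivAt_id x)
      refine HasFDerivAt.congr_fderiv h4 ?_
      ext v
      simp [real_inner_comm, inner_smul_left, two_smul, inner_add_left]
    have h5 : HasFDerivAt h
        (toDual ℝ _ (gradient U x) - (κ/2) • toDual ℝ _ ((2:ℝ) • x)) x := by
      rw [hfun]; exact h2.sub (h3.const_mul (κ/2))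
    have h6 : (toDual ℝ (EuclideanSpace ℝ (Fin d))) (gradient U x)
        - (κ/2) • (toDual ℝ _ ((2:ℝ) • x)) = toDual ℝ _ (gradient U x - κ • x) := by
      ext w
      simp only [ContinuousLinearMap.sub_apply, ContinuousLinearMap.coe_smul',
        Pi.smul_apply, InnerProductSpace.toDual_apply_apply, inner_sub_left,
        real_inner_smul_left, smul_eq_mul]
      ring
    rw [h6] at h5
    exact hasGradientAt_iff_hasFDerivAt.mpr h5
  have hgrad : ∀ x, gradient h x = gradient U x - κ • x := fun x => (key x).gradient
  have hinner : ∀ (y v : EuclideanSpace ℝ (Fin d)),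
      fderiv ℝ h y v = (inner ℝ (gradient h y) v : ℝ) := fun y v =>
    (InnerProductSpace.toDual_symm_apply).symm
  -- the segment
  set p : EuclideanSpace ℝ (Fin d) := (r / ‖q‖) • q with hp
  set v : EuclideanSpace ℝ (Fin d) := p - q with hv
  have hnp : ‖p‖ = r := by
    rw [hp, norm_smul, Real.norm_eq_abs, abs_of_pos (div_pos hr hq0),
      div_mul_cancel₀ _ (ne_of_gt hq0)]
  set L : ℝ → EuclideanSpace ℝ (Fin d) := fun t => q + t • v with hLdef
  have hL0 : L 0 = q := by simp [hLdef]
  have hL1 : L 1 = p := by simp [hLdef, hv]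
  have hLt : ∀ t : ℝ, L t = (1 + t*(r/‖q‖ - 1)) • q := by
    intro t
    simp only [hLdef, hv, hp]
    module
  have hLnorm : ∀ t:ℝ, 0 ≤ t → t ≤ 1 → ‖L t‖ = ‖q‖ + t*(r - ‖q‖) := by
    intro t ht0 ht1
    have hrq : 0 < r / ‖q‖ := div_pos hr hq0
    have hnn : 0 ≤ 1 + t*(r/‖q‖ - 1) := by nlinarith
    rw [hLt, norm_smul, Real.norm_eq_abs, abs_of_nonneg hnn]
    field_simp
  have hLd : ∀ t : ℝ, HasDerivAt L v t := by
    intro t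
    have := ((hasDerivAt_id t).smul_const v).const_add q
    rw [one_smul] at this; exact this
  have hgd : ∀ t, HasDerivAt (fun s => h (L s)) (inner ℝ (gradient h (L t)) v : ℝ) t := by
    intro t
    have h1 : HasFDerivAt h (fderiv ℝ h (L t)) (L t) := (hhdiff (L t)).hasFDerivAt
    have h2 := h1.comp_hasDerivAt t (hLd t)
    rw [← hinner]; exact h2
  have hgrad_d : ∀ t, HasDerivAt (fun s => gradient h (L s))
      ((fderiv ℝ (gradient h) (L t)) v) t := by
    intro t
    have h1 : HasFDerivAt (gradient h) (fderiv ℝ (gradient h) (L t)) (L t) :=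
      ((hgradC1.differentiable one_ne_zero) (L t)).hasFDerivAt
    exact h1.comp_hasDerivAt t (hLd t)
  have hg1d : ∀ t, HasDerivAt (fun s => (inner ℝ (gradient h (L s)) v : ℝ))
      (inner ℝ ((fderiv ℝ (gradient h) (L t)) v) v : ℝ) t := by
    intro t
    have := (hgrad_d t).inner ℝ (hasDerivAt_const t v)
    simpa using this
  have hmono : MonotoneOn (fun s => (inner ℝ (gradient h (L s)) v : ℝ)) (Set.Icc 0 1) := by
    apply monotoneOn_of_deriv_nonneg (convex_Icc 0 1)
    · exact fun t _ => (hg1d t).differentiableAt.continuousAt.continuousWithinAt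
    · exact fun t _ => (hg1d t).differentiableAt.differentiableWithinAt
    · intro t ht
      rw [interior_Icc] at ht
      rw [(hg1d t).deriv]
      have hlt : r < ‖L t‖ := by
        rw [hLnorm t ht.1.le ht.2.le]
        nlinarith [ht.1, ht.2, hq]
      have := hconv (L t) hlt v
      rwa [real_inner_comm] at this
  have hFd : ∀ t, HasDerivAt
      (fun s => h (L s) - h (L 0) - s * (inner ℝ (gradient h (L 0)) v : ℝ))
      ((inner ℝ (gradient h (L t)) v : ℝ) - (inner ℝ (gradient h (L 0)) v : ℝ)) t := by
    intro t
    have := ((hgd t).sub_const (h (L 0))).sub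
      ((hasDerivAt_id t).mul_const (inner ℝ (gradient h (L 0)) v : ℝ))
    rw [one_mul] at this; exact this
  have hFmono : MonotoneOn
      (fun s => h (L s) - h (L 0) - s * (inner ℝ (gradient h (L 0)) v : ℝ)) (Set.Icc 0 1) := by
    apply monotoneOn_of_deriv_nonneg (convex_Icc 0 1)
    · exact fun t _ => (hFd t).differentiableAt.continuousAt.continuousWithinAt
    · exact fun t _ => (hFd t).differentiableAt.differentiableWithinAt
    · intro t ht
      rw [(hFd t).deriv]
      rw [interior_Icc] at ht
      have := hmono (Set.left_mem_Icc.mpr zero_le_one) ⟨ht.1.le, ht.2.le⟩ ht.1.le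
      linarith
  have hF01 := hFmono (Set.left_mem_Icc.mpr zero_le_one)
    (Set.right_mem_Icc.mpr zero_le_one) zero_le_one
  simp only [hL0, hL1] at hF01
  -- hF01 : h q - h q - 0 * ... ≤ h p - h q - 1 * ...
  have hkey : h q + (inner ℝ (gradient h q) v : ℝ) ≤ h p := by
    have h7 : (0:ℝ) ≤ h p - h q - 1 * (inner ℝ (gradient h q) v : ℝ) := by
      simpa using hF01
    linarith
  -- translate to U
  have hstrong : U q + (inner ℝ (gradient U q) v : ℝ) + κ/2 * ‖v‖^2 ≤ U p := by
    rw [hh q, hh p, hgrad q, inner_sub_left, real_inner_smul_left] at hkey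
    have e1 : ‖v‖^2 = ‖p‖^2 - 2*(inner ℝ q p : ℝ) + ‖q‖^2 := by
      rw [hv, ← real_inner_self_eq_norm_sq, ← real_inner_self_eq_norm_sq,
        ← real_inner_self_eq_norm_sq]
      simp only [inner_sub_left, inner_sub_right, real_inner_comm p q]
      ring
    have e2 : (inner ℝ q v : ℝ) = (inner ℝ q p : ℝ) - ‖q‖^2 := by
      rw [hv, inner_sub_right, real_inner_self_eq_norm_sq]
    rw [e2] at hkey
    rw [e1]
    ring_nf
    ring_nf at hkey
    linarith
  -- finish
  have hb : Real.sqrt (2*κ*(U p + C)) ≤ Ct := hCt.1 ⟨p, by simp [hnp], rfl⟩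
  have hCS : -(‖gradient U q‖ * ‖v‖) ≤ (inner ℝ (gradient U q) v : ℝ) :=
    (abs_le.mp (abs_real_inner_le_norm _ _)).1
  have hv' : v = (r/‖q‖ - 1) • q := by rw [hv, hp]; module
  have hvnorm : ‖v‖ = ‖q‖ - r := by
    rw [hv', norm_smul, Real.norm_eq_abs,
      abs_of_neg (by rw [sub_neg]; exact (div_lt_one hq0).mpr hq)]
    field_simp
    ring
  rw [hvnorm] at hCS hstrong
  set G := ‖gradient U q‖ with hG
  have hGnn : 0 ≤ G := norm_nonneg _
  have hlin : U q + C ≤ U p + C + G*(‖q‖ - r) - κ/2*(‖q‖ - r)^2 := by linarith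
  have hmul : 2*κ*(U q + C) ≤ 2*κ*(U p + C + G*(‖q‖ - r) - κ/2*(‖q‖ - r)^2) := by
    have h2κ : (0:ℝ) ≤ 2*κ := by linarith
    exact mul_le_mul_of_nonneg_left hlin h2κ
  have hb2 : 2*κ*(U p + C) ≤ Ct^2 := by
    have hx : (0:ℝ) ≤ 2*κ*(U p + C) := mul_nonneg (by linarith) (hposAll p)
    have hsq := Real.sq_sqrt hx
    nlinarith [Real.sqrt_nonneg (2*κ*(U p + C)), hb, hsq]
  have hfin : 2*κ*(U q + C) ≤ (G + Ct)^2 := by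
    nlinarith [sq_nonneg (G - κ*(‖q‖ - r)), mul_nonneg hGnn hCt0, hmul, hb2]
  have hsqrt : Real.sqrt (2*κ*(U q + C)) ≤ G + Ct := by
    calc Real.sqrt (2*κ*(U q + C)) ≤ Real.sqrt ((G + Ct)^2) := Real.sqrt_le_sqrt hfin
    _ = G + Ct := Real.sqrt_sq (by linarith)
  linarith
end

section
/- Let U ∈ C³(ℝ^d), q, p ∈ ℝ^d with ⟨p, ∇U(q)⟩ possibly nonzero, and define for ε > 0 the flip rate λ_𝔰(q,p) = ( −g(e^{−(U(q+εp)−U(q))}) + g(e^{−(U(q−εp)−U(q))}) − ε⟨p, ∇U(q)⟩ )⁺. If g(t) = √t, then λ_𝔰(q,p) = O(ε³) as ε → 0. -/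
open Real Filter Asymptotics

private lemma deriv_step (f f' : ℝ → ℝ) (hd : ∀ x, HasDerivAt f (f' x) x) (h0 : f 0 = 0)
    (n : ℕ) (hO : f' =O[nhds (0:ℝ)] fun ε => ε ^ n) :
    f =O[nhds (0:ℝ)] fun ε => ε ^ (n + 1) := by
  rw [isBigO_iff] at hO ⊢
  obtain ⟨C, hC⟩ := hO
  rw [Metric.eventually_nhds_iff] at hC
  obtain ⟨δ, hδ, hball⟩ := hC
  refine ⟨|C|, ?_⟩
  rw [Metric.eventually_nhds_iff]
  refine ⟨δ, hδ, fun ε hε => ?_⟩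
  simp only [Real.dist_eq, sub_zero] at hε
  have hmem0 : (0:ℝ) ∈ Metric.closedBall (0:ℝ) |ε| := by
    simp [Metric.mem_closedBall]
  have hmemε : ε ∈ Metric.closedBall (0:ℝ) |ε| := by
    simp [Metric.mem_closedBall, Real.dist_eq]
  have hbound : ∀ y ∈ Metric.closedBall (0:ℝ) |ε|, ‖f' y‖ ≤ |C| * |ε| ^ n := by
    intro y hy
    have hy' : |y| ≤ |ε| := by simpa [Real.dist_eq] using Metric.mem_closedBall.1 hy
    have hyδ : dist y 0 < δ := by
      rw [Real.dist_eq, sub_zero]; exact lt_of_le_of_lt hy' hε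
    calc ‖f' y‖ ≤ C * ‖y ^ n‖ := hball hyδ
      _ ≤ |C| * |y| ^ n := by
          rw [Real.norm_eq_abs, abs_pow]
          exact mul_le_mul_of_nonneg_right (le_abs_self C) (by positivity)
      _ ≤ |C| * |ε| ^ n :=
          mul_le_mul_of_nonneg_left (pow_le_pow_left₀ (abs_nonneg y) hy' n) (abs_nonneg C)
  have key := (convex_closedBall (0:ℝ) |ε|).norm_image_sub_le_of_norm_hasDerivWithin_le
    (fun y _ => (hd y).hasDerivWithinAt) hbound hmem0 hmemε
  calc ‖f ε‖ = ‖f ε - f 0‖ := by rw [h0, sub_zero]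
    _ ≤ |C| * |ε| ^ n * ‖ε - 0‖ := key
    _ = |C| * ‖ε ^ (n + 1)‖ := by
        rw [sub_zero]
        simp [Real.norm_eq_abs, abs_pow, pow_succ, mul_assoc]

private lemma odd_diff_cubic (g : ℝ → ℝ) (hg : ContDiff ℝ 3 g) :
    (fun ε => g (-ε) - g ε + 2 * deriv g 0 * ε) =O[nhds (0:ℝ)] fun ε => ε ^ 3 := by
  set g1 := deriv g with hg1def
  rw [show (3 : WithTop ℕ∞) = 2 + 1 from rfl, contDiff_succ_iff_deriv] at hg
  obtain ⟨hgd, -, hg1⟩ := hg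
  rw [show (2 : WithTop ℕ∞) = 1 + 1 from rfl, contDiff_succ_iff_deriv] at hg1
  obtain ⟨hg1d, -, hg2⟩ := hg1
  set g2 := deriv g1 with hg2def
  have hd : ∀ x, HasDerivAt g (g1 x) x := fun x => (hgd x).hasDerivAt
  have hd1 : ∀ x, HasDerivAt g1 (g2 x) x := fun x => (hg1d x).hasDerivAt
  -- F2 = O(ε)
  have hF2 : (fun ε => g2 (-ε) - g2 ε) =O[nhds (0:ℝ)] fun ε => ε ^ 1 := by
    have hdiff : DifferentiableAt ℝ (fun ε => g2 (-ε) - g2 ε) 0 := by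
      have h2d : Differentiable ℝ g2 := (hg2.differentiable one_ne_zero)
      exact ((h2d.comp differentiable_neg).differentiableAt).sub (h2d 0)
    have := hdiff.isBigO_sub
    simp only [neg_zero, sub_self, sub_zero] at this
    simpa using this
  -- F1 = O(ε²)
  have hF1 : (fun ε => -g1 (-ε) - g1 ε + 2 * g1 0) =O[nhds (0:ℝ)] fun ε => ε ^ 2 := by
    refine deriv_step _ (fun ε => g2 (-ε) - g2 ε) (fun x => ?_) (by ring) 1 hF2
    have ha : HasDerivAt (fun ε : ℝ => -g1 (-ε)) (g2 (-x)) x := by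
      have := ((hd1 (-x)).comp x (hasDerivAt_neg x)).neg
      simpa [Function.comp_def, Pi.neg_def] using this
    simpa using (ha.sub (hd1 x)).add_const (2 * g1 0)
  -- F = O(ε³)
  refine deriv_step _ (fun ε => -g1 (-ε) - g1 ε + 2 * g1 0) (fun x => ?_) (by ring) 2 hF1
  have ha : HasDerivAt (fun ε : ℝ => g (-ε)) (-g1 (-x)) x := by
    have := (hd (-x)).comp x (hasDerivAt_neg x)
    simpa [Function.comp_def] using this
  have hb : HasDerivAt (fun ε : ℝ => 2 * deriv g 0 * ε) (2 * g1 0) x := by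
    simpa [hg1def] using (hasDerivAt_id x).const_mul (2 * deriv g 0)
  simpa [sub_eq_add_neg, add_assoc, Pi.add_def] using (ha.sub (hd x)).add hb

/-- With the square-root balancing function, the flip rate of the Bouncy Jump sampler
scales as `O(ε³)` as the step size `ε → 0⁺`. -/
theorem bjs_flip_rate_sqrt_cubic
    {d : ℕ} (U : EuclideanSpace ℝ (Fin d) → ℝ) (hU : ContDiff ℝ 3 U)
    (q p : EuclideanSpace ℝ (Fin d))
    (lamS : ℝ → ℝ)
    (hlamS : ∀ ε : ℝ, lamS ε =
      max (-Real.sqrt (Real.exp (-(U (q + ε • p) - U q)))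
           + Real.sqrt (Real.exp (-(U (q - ε • p) - U q)))
           - ε * inner ℝ p (gradient U q)) 0) :
    lamS =O[nhdsWithin 0 (Set.Ioi 0)] fun ε : ℝ => ε ^ 3 := by
  set c : ℝ := inner ℝ p (gradient U q) with hc
  set g : ℝ → ℝ := fun ε => Real.exp (-(U (q + ε • p) - U q) / 2) with hgdef
  -- g is C³
  have hline : ∀ v : EuclideanSpace ℝ (Fin d), ContDiff ℝ 3 (fun ε : ℝ => q + ε • v) :=
    fun v => contDiff_const.add (contDiff_id.smul contDiff_const)
  have hgC : ContDiff ℝ 3 g := by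
    exact Real.contDiff_exp.comp ((((hU.comp (hline p)).sub contDiff_const).neg).div_const 2)
  -- derivative of g at 0 is -c/2
  have hUd : Differentiable ℝ U := hU.differentiable (by norm_num)
  have hL : HasDerivAt (fun ε : ℝ => q + ε • p) p 0 := by
    simpa using ((hasDerivAt_id (0:ℝ)).smul_const p).const_add q
  have hq0 : q + (0:ℝ) • p = q := by simp
  have hUc : HasDerivAt (fun ε : ℝ => U (q + ε • p)) c 0 := by
    have hfd : HasFDerivAt U (fderiv ℝ U q) (q + (0:ℝ) • p) := hq0.symm ▸ (hUd q).hasFDerivAt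
    have := hfd.comp_hasDerivAt 0 hL
    have hval : fderiv ℝ U q p = c := by
      have hgr := (hUd q).hasGradientAt
      rw [hasGradientAt_iff_hasFDerivAt] at hgr
      rw [hgr.fderiv, InnerProductSpace.toDual_apply_apply, hc]
      exact real_inner_comm _ _
    rw [hval] at this
    simpa [Function.comp_def] using this
  have hderivg : deriv g 0 = -c / 2 := by
    have hw : HasDerivAt (fun ε : ℝ => -(U (q + ε • p) - U q) / 2) (-c / 2) 0 :=
      ((hUc.sub_const (U q)).neg).div_const 2
    have : HasDerivAt g (Real.exp (-(U (q + (0:ℝ) • p) - U q) / 2) * (-c / 2)) 0 := hw.exp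
    rw [this.deriv]
    simp [hq0]
  -- main bound
  have hO : (fun ε => g (-ε) - g ε + 2 * deriv g 0 * ε) =O[nhds (0:ℝ)] fun ε => ε ^ 3 :=
    odd_diff_cubic g hgC
  have heq : ∀ ε : ℝ, lamS ε = max (g (-ε) - g ε + 2 * deriv g 0 * ε) 0 := by
    intro ε
    rw [hlamS ε, hderivg]
    congr 1
    rw [← Real.exp_half, ← Real.exp_half]
    have : q + (-ε) • p = q - ε • p := by
      rw [neg_smul, sub_eq_add_neg]
    rw [hgdef]
    simp only [this]
    ring
  have hle : ∀ ε : ℝ, ‖lamS ε‖ ≤ ‖g (-ε) - g ε + 2 * deriv g 0 * ε‖ := by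
    intro ε
    rw [heq ε, Real.norm_eq_abs, Real.norm_eq_abs,
      abs_of_nonneg (le_max_right _ _)]
    exact max_le (le_abs_self _) (abs_nonneg _)
  exact (isBigO_of_le _ hle).trans (hO.mono nhdsWithin_le_nhds)
end

section
/- Let U ∈ C³(ℝ^d) and define λ_𝔰(q,p) = ( −g(e^{−(U(q+εp)−U(q))}) + g(e^{−(U(q−εp)−U(q))}) − ε⟨p, ∇U(q)⟩ )⁺ with g(t) = min{1,t}. Then λ_𝔰(q,p) = O(ε²) as ε → 0. Moreover, without the gradient term (i.e. λ̂(q,p) = (−g(e^{−(U(q+εp)−U(q))}) + g(e^{−(U(q−εp)−U(q))}))⁺ with g(t)=min{1,t}), the rate is O(ε) in general. -/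
open Real Filter Asymptotics

/-- Second-order Taylor bound from the right: if `F` is `C²`, then
`F ε - F 0 - ε * deriv F 0 = O(ε²)` as `ε → 0⁺`. -/
lemma taylor2_right (F : ℝ → ℝ) (hF : ContDiff ℝ 2 F) :
    (fun ε => F ε - F 0 - ε * deriv F 0) =O[nhdsWithin 0 (Set.Ioi 0)]
      fun ε : ℝ => ε ^ 2 := by
  have hdiff : Differentiable ℝ F := hF.differentiable (by norm_num)
  have hF' : ContDiff ℝ 1 (deriv F) := by
    have h2 : ContDiff ℝ ((1 : ℕ) + 1) F := by exact_mod_cast hF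
    exact ((contDiff_succ_iff_deriv).mp h2).2.2
  obtain ⟨K, t, ht, hlip⟩ := hF'.contDiffAt.exists_lipschitzOnWith (x := 0)
  obtain ⟨r, hr, hball⟩ := Metric.mem_nhds_iff.mp ht
  rw [isBigO_iff]
  refine ⟨K, ?_⟩
  have h1 : ∀ᶠ ε : ℝ in nhdsWithin 0 (Set.Ioi 0), ε ∈ Set.Ioi (0:ℝ) :=
    eventually_mem_nhdsWithin
  have h2 : ∀ᶠ ε : ℝ in nhdsWithin 0 (Set.Ioi 0), |ε| < r := by
    apply eventually_nhdsWithin_of_eventually_nhds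
    have : ∀ᶠ ε : ℝ in nhds 0, dist ε 0 < r := Metric.eventually_nhds_iff_ball.mpr
      ⟨r, hr, fun y hy => by simpa using hy⟩
    simpa [Real.dist_eq] using this
  filter_upwards [h1, h2] with ε hε hεr
  have hε0 : (0:ℝ) < ε := hε
  set c := deriv F 0 with hc
  have hmem : ∀ x ∈ Set.Icc (0:ℝ) ε, x ∈ t := by
    intro x hx
    apply hball
    simp only [Metric.mem_ball, Real.dist_eq, sub_zero]
    have : |x| ≤ |ε| := by
      rw [abs_of_nonneg hx.1, abs_of_nonneg hε0.le]; exact hx.2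
    linarith
  have hderivg : ∀ x ∈ Set.Icc (0:ℝ) ε,
      HasDerivWithinAt (fun u => F u - u * c) (deriv F x - c) (Set.Icc 0 ε) x := by
    intro x hx
    exact (((hdiff x).hasDerivAt).sub (hasDerivAt_mul_const c)).hasDerivWithinAt
  have hbound : ∀ x ∈ Set.Ico (0:ℝ) ε, ‖deriv F x - c‖ ≤ (K : ℝ) * ε := by
    intro x hx
    have hx' : x ∈ Set.Icc (0:ℝ) ε := ⟨hx.1, hx.2.le⟩
    have h0t : (0:ℝ) ∈ t := hmem 0 ⟨le_rfl, hε0.le⟩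
    have := hlip.dist_le_mul x (hmem x hx') 0 h0t
    rw [Real.dist_eq, Real.dist_eq, sub_zero] at this
    have hxε : |x| ≤ ε := by rw [abs_of_nonneg hx.1]; exact hx'.2
    calc ‖deriv F x - c‖ = dist (deriv F x) (deriv F 0) := by
          rw [hc, Real.dist_eq, Real.norm_eq_abs]
      _ ≤ (K : ℝ) * |x| := this
      _ ≤ (K : ℝ) * ε := by
          exact mul_le_mul_of_nonneg_left hxε K.coe_nonneg
  have key := norm_image_sub_le_of_norm_deriv_le_segment' hderivg hbound ε
    (Set.right_mem_Icc.2 hε0.le)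
  simp only [zero_mul, sub_zero] at key
  have key2 : ‖F ε - F 0 - ε * c‖ ≤ (K : ℝ) * ε * ε := by
    have heq : F ε - F 0 - ε * c = (F ε - ε * c) - F 0 := by ring
    rw [heq]
    exact key
  calc ‖F ε - F 0 - ε * c‖ ≤ (K : ℝ) * ε * ε := key2
    _ = (K : ℝ) * ‖ε ^ 2‖ := by
        rw [Real.norm_eq_abs, abs_of_nonneg (by positivity : (0:ℝ) ≤ ε ^ 2)]; ring

/-- `exp (-t) ≤ 1 - t + t²/2` for `t ≥ 0`. -/
lemma exp_neg_ub {t : ℝ} (ht : 0 ≤ t) : Real.exp (-t) ≤ 1 - t + t ^ 2 / 2 := by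
  have h := Real.quadratic_le_exp_of_nonneg ht
  have hpos := Real.exp_pos t
  rw [Real.exp_neg, inv_eq_one_div, div_le_iff₀ hpos]
  nlinarith [sq_nonneg (t - 1), sq_nonneg t, sq_nonneg (t * t)]

lemma min_one_exp (t : ℝ) : min 1 (Real.exp (-t)) = Real.exp (-(max t 0)) := by
  rcases le_total t 0 with h | h
  · rw [max_eq_right h, neg_zero, Real.exp_zero,
      min_eq_left (Real.one_le_exp (by linarith : (0:ℝ) ≤ -t))]
  · rw [max_eq_left h, min_eq_right (Real.exp_le_one_iff.mpr (by linarith))]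

/-- Key pointwise estimate. -/
lemma key_bound (x y s : ℝ) :
    |max (-min 1 (Real.exp (-x)) + min 1 (Real.exp (-y)) - s) 0| ≤
      |x - s| + |y + s| + x ^ 2 / 2 + y ^ 2 / 2 := by
  rw [min_one_exp x, min_one_exp y]
  set a := max x 0 with ha
  set b := max y 0 with hb
  have ha0 : 0 ≤ a := le_max_right _ _
  have hb0 : 0 ≤ b := le_max_right _ _
  have h1 : |a - max s 0| ≤ |x - s| := abs_max_sub_max_le_abs x s 0
  have h2 : |b - max (-s) 0| ≤ |y + s| := by
    have := abs_max_sub_max_le_abs y (-s) 0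
    rwa [sub_neg_eq_add] at this
  have hs : max s 0 - max (-s) 0 = s := by
    rcases le_total s 0 with h | h
    · rw [max_eq_right h, max_eq_left (by linarith)]; ring
    · rw [max_eq_left h, max_eq_right (by linarith)]; ring
  have hra : |Real.exp (-a) - (1 - a)| ≤ a ^ 2 / 2 := by
    rw [abs_le]
    constructor
    · have := Real.add_one_le_exp (-a); nlinarith
    · have := exp_neg_ub ha0; linarith
  have hrb : |Real.exp (-b) - (1 - b)| ≤ b ^ 2 / 2 := by
    rw [abs_le]
    constructor
    · have := Real.add_one_le_exp (-b); nlinarith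
    · have := exp_neg_ub hb0; linarith
  have ha2 : a ^ 2 ≤ x ^ 2 := by
    rcases le_total x 0 with h | h
    · rw [ha, max_eq_right h]; nlinarith
    · rw [ha, max_eq_left h]
  have hb2 : b ^ 2 ≤ y ^ 2 := by
    rcases le_total y 0 with h | h
    · rw [hb, max_eq_right h]; nlinarith
    · rw [hb, max_eq_left h]
  set z := -Real.exp (-a) + Real.exp (-b) - s with hz
  have hzabs : |z| ≤ |x - s| + |y + s| + x ^ 2 / 2 + y ^ 2 / 2 := by
    have hzeq : z = (a - max s 0) - (b - max (-s) 0)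
        + (Real.exp (-b) - (1 - b)) - (Real.exp (-a) - (1 - a)) := by
      rw [hz]; linarith [hs]
    calc |z| ≤ |a - max s 0| + |b - max (-s) 0|
          + |Real.exp (-b) - (1 - b)| + |Real.exp (-a) - (1 - a)| := by
          rw [hzeq]
          have := abs_sub (((a - max s 0) - (b - max (-s) 0))
            + (Real.exp (-b) - (1 - b))) (Real.exp (-a) - (1 - a))
          calc _ ≤ |((a - max s 0) - (b - max (-s) 0)) + (Real.exp (-b) - (1 - b))|
                + |Real.exp (-a) - (1 - a)| := abs_sub _ _
            _ ≤ |(a - max s 0) - (b - max (-s) 0)| + |Real.exp (-b) - (1 - b)|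
                + |Real.exp (-a) - (1 - a)| := by
                have := abs_add_le ((a - max s 0) - (b - max (-s) 0))
                  (Real.exp (-b) - (1 - b))
                linarith
            _ ≤ _ := by
                have := abs_sub (a - max s 0) (b - max (-s) 0)
                linarith
      _ ≤ |x - s| + |y + s| + y ^ 2 / 2 + x ^ 2 / 2 := by
          have : b ^ 2 / 2 ≤ y ^ 2 / 2 := by linarith
          have : a ^ 2 / 2 ≤ x ^ 2 / 2 := by linarith
          linarith
      _ = _ := by ring
  have hmz : |max z 0| ≤ |z| := by
    rw [abs_of_nonneg (le_max_right z 0)]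
    exact max_le (le_abs_self z) (abs_nonneg z)
  exact hmz.trans hzabs

/-- With the Metropolis balancing function `g(t) = min{1,t}`, the flip rate of the
Bouncy Jump sampler scales as `O(ε²)`, while the rate without the gradient (bounce)
term only scales as `O(ε)` in general. -/
theorem bjs_flip_rate_metropolis
    {d : ℕ} (U : EuclideanSpace ℝ (Fin d) → ℝ) (hU : ContDiff ℝ 3 U)
    (q p : EuclideanSpace ℝ (Fin d))
    (g : ℝ → ℝ) (hg : ∀ t, g t = min 1 t)
    (lamS lamHat : ℝ → ℝ)
    (hlamS : ∀ ε : ℝ, lamS ε =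
      max (-g (Real.exp (-(U (q + ε • p) - U q)))
           + g (Real.exp (-(U (q - ε • p) - U q)))
           - ε * inner ℝ p (gradient U q)) 0)
    (hlamHat : ∀ ε : ℝ, lamHat ε =
      max (-g (Real.exp (-(U (q + ε • p) - U q)))
           + g (Real.exp (-(U (q - ε • p) - U q)))) 0) :
    (lamS =O[nhdsWithin 0 (Set.Ioi 0)] fun ε : ℝ => ε ^ 2) ∧
    (lamHat =O[nhdsWithin 0 (Set.Ioi 0)] fun ε : ℝ => ε) := by
  set l := nhdsWithin (0:ℝ) (Set.Ioi 0) with hl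
  have hU2 : ContDiff ℝ 2 U := hU.of_le (by norm_num)
  have hUdiff : Differentiable ℝ U := hU.differentiable (by norm_num)
  set c : ℝ := inner ℝ p (gradient U q) with hcdef
  -- the two curves
  set F₁ : ℝ → ℝ := fun ε => U (q + ε • p) with hF₁
  set F₂ : ℝ → ℝ := fun ε => U (q - ε • p) with hF₂
  have hcurve1 : ContDiff ℝ 2 F₁ :=
    hU2.comp (contDiff_const.add (contDiff_id.smul contDiff_const))
  have hcurve2 : ContDiff ℝ 2 F₂ :=
    hU2.comp (contDiff_const.sub (contDiff_id.smul contDiff_const))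
  -- derivatives at 0
  have hfd : fderiv ℝ U q p = c := by
    have hgrad : HasGradientAt U (gradient U q) q := (hUdiff q).hasGradientAt
    have hfd' : HasFDerivAt U (InnerProductSpace.toDual ℝ _ (gradient U q)) q :=
      hasGradientAt_iff_hasFDerivAt.mp hgrad
    rw [hfd'.fderiv, InnerProductSpace.toDual_apply_apply, hcdef, real_inner_comm]
  have hd1 : HasDerivAt F₁ c 0 := by
    have hγ : HasDerivAt (fun ε : ℝ => q + ε • p) p 0 := by
      simpa using ((hasDerivAt_id (0:ℝ)).smul_const p).const_add q
    have hq0 : q + (0:ℝ) • p = q := by simp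
    have hUq : HasFDerivAt U (fderiv ℝ U q) (q + (0:ℝ) • p) := by
      rw [hq0]; exact (hUdiff q).hasFDerivAt
    have h := hUq.comp_hasDerivAt 0 hγ
    rw [hfd] at h
    exact h
  have hd2 : HasDerivAt F₂ (-c) 0 := by
    have hγ : HasDerivAt (fun ε : ℝ => q - ε • p) (-p) 0 := by
      simpa using ((hasDerivAt_id (0:ℝ)).smul_const p).const_sub q
    have hq0 : q - (0:ℝ) • p = q := by simp
    have hUq : HasFDerivAt U (fderiv ℝ U q) (q - (0:ℝ) • p) := by
      rw [hq0]; exact (hUdiff q).hasFDerivAt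
    have := hUq.comp_hasDerivAt 0 hγ
    rw [map_neg, hfd] at this
    exact this
  have hF10 : F₁ 0 = U q := by simp [hF₁]
  have hF20 : F₂ 0 = U q := by simp [hF₂]
  -- Taylor O(ε²) bounds
  have hA : (fun ε => F₁ ε - U q - ε * c) =O[l] fun ε : ℝ => ε ^ 2 := by
    have := taylor2_right F₁ hcurve1
    rwa [hd1.deriv, hF10] at this
  have hB : (fun ε => F₂ ε - U q + ε * c) =O[l] fun ε : ℝ => ε ^ 2 := by
    have := taylor2_right F₂ hcurve2
    rw [hd2.deriv, hF20] at this
    simpa [sub_eq_add_neg, neg_mul, mul_neg] using this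
  -- ε² = O(ε) and ε*c = O(ε) on l
  have hsq : (fun ε : ℝ => ε ^ 2) =O[l] fun ε : ℝ => ε := by
    rw [isBigO_iff]
    refine ⟨1, ?_⟩
    have : ∀ᶠ ε : ℝ in l, |ε| < 1 := by
      apply eventually_nhdsWithin_of_eventually_nhds
      have : ∀ᶠ ε : ℝ in nhds 0, dist ε 0 < 1 := Metric.eventually_nhds_iff_ball.mpr
        ⟨1, one_pos, fun y hy => by simpa using hy⟩
      simpa [Real.dist_eq] using this
    filter_upwards [this] with ε hε
    rw [Real.norm_eq_abs, Real.norm_eq_abs, abs_pow]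
    nlinarith [abs_nonneg ε]
  have hlin : (fun ε : ℝ => ε * c) =O[l] fun ε : ℝ => ε := by
    simpa [mul_comm] using (isBigO_refl (fun ε : ℝ => ε) l).const_mul_left c
  -- x and y are O(ε)
  have hxO : (fun ε => F₁ ε - U q) =O[l] fun ε : ℝ => ε := by
    have := (hA.trans hsq).add hlin
    simpa using this
  have hyO : (fun ε => F₂ ε - U q) =O[l] fun ε : ℝ => ε := by
    have := (hB.trans hsq).sub hlin
    simpa using this
  have hx2 : (fun ε => (F₁ ε - U q) ^ 2) =O[l] fun ε : ℝ => ε ^ 2 := by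
    have := hxO.mul hxO
    simpa [pow_two] using this
  have hy2 : (fun ε => (F₂ ε - U q) ^ 2) =O[l] fun ε : ℝ => ε ^ 2 := by
    have := hyO.mul hyO
    simpa [pow_two] using this
  -- bounding functions
  have hboundS : ∀ ε : ℝ, ‖lamS ε‖ ≤
      ‖|F₁ ε - U q - ε * c| + |F₂ ε - U q + ε * c|
        + (F₁ ε - U q) ^ 2 / 2 + (F₂ ε - U q) ^ 2 / 2‖ := by
    intro ε
    have hk := key_bound (U (q + ε • p) - U q) (U (q - ε • p) - U q) (ε * c)
    rw [Real.norm_eq_abs, Real.norm_eq_abs, hlamS ε, hg, hg]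
    have hnn : (0:ℝ) ≤ |F₁ ε - U q - ε * c| + |F₂ ε - U q + ε * c|
        + (F₁ ε - U q) ^ 2 / 2 + (F₂ ε - U q) ^ 2 / 2 := by positivity
    rw [abs_of_nonneg hnn]
    exact hk
  have hboundH : ∀ ε : ℝ, ‖lamHat ε‖ ≤
      ‖|F₁ ε - U q| + |F₂ ε - U q|
        + (F₁ ε - U q) ^ 2 / 2 + (F₂ ε - U q) ^ 2 / 2‖ := by
    intro ε
    have hk := key_bound (U (q + ε • p) - U q) (U (q - ε • p) - U q) 0
    rw [Real.norm_eq_abs, Real.norm_eq_abs, hlamHat ε, hg, hg]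
    have hnn : (0:ℝ) ≤ |F₁ ε - U q| + |F₂ ε - U q|
        + (F₁ ε - U q) ^ 2 / 2 + (F₂ ε - U q) ^ 2 / 2 := by positivity
    rw [abs_of_nonneg hnn]
    simpa using hk
  constructor
  · refine (isBigO_of_le l hboundS).trans ?_
    have h1 : (fun ε => |F₁ ε - U q - ε * c|) =O[l] fun ε : ℝ => ε ^ 2 := by
      simpa using hA.norm_left
    have h2 : (fun ε => |F₂ ε - U q + ε * c|) =O[l] fun ε : ℝ => ε ^ 2 := by
      simpa using hB.norm_left
    have h3 : (fun ε => (F₁ ε - U q) ^ 2 / 2) =O[l] fun ε : ℝ => ε ^ 2 := by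
      simpa [div_eq_inv_mul] using hx2.const_mul_left (2:ℝ)⁻¹
    have h4 : (fun ε => (F₂ ε - U q) ^ 2 / 2) =O[l] fun ε : ℝ => ε ^ 2 := by
      simpa [div_eq_inv_mul] using hy2.const_mul_left (2:ℝ)⁻¹
    exact ((h1.add h2).add h3).add h4
  · refine (isBigO_of_le l hboundH).trans ?_
    have h1 : (fun ε => |F₁ ε - U q|) =O[l] fun ε : ℝ => ε := by
      simpa using hxO.norm_left
    have h2 : (fun ε => |F₂ ε - U q|) =O[l] fun ε : ℝ => ε := by
      simpa using hyO.norm_left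
    have h3 : (fun ε => (F₁ ε - U q) ^ 2 / 2) =O[l] fun ε : ℝ => ε := by
      refine IsBigO.trans ?_ hsq
      simpa [div_eq_inv_mul] using hx2.const_mul_left (2:ℝ)⁻¹
    have h4 : (fun ε => (F₂ ε - U q) ^ 2 / 2) =O[l] fun ε : ℝ => ε := by
      refine IsBigO.trans ?_ hsq
      simpa [div_eq_inv_mul] using hy2.const_mul_left (2:ℝ)⁻¹
    exact ((h1.add h2).add h3).add h4
end
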